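/- Let A be a Banach lattice algebra whose product has a two-sided identity e with ‖e‖ = 1. Then e ≥ 0, i.e., the multiplicative identity of a Banach lattice algebra is positive. -/

import Mathlib

section Aux

variable {A : Type*} [NormedAddCommGroup A] [NormedSpace ℝ A]

/-- Auxiliary: iterated left multiplication by `p`, starting at `e`. -/
def mpowAux (mul : A →ₗ[ℝ] A →ₗ[ℝ] A) (e p : A) : ℕ → A
  | 0 => e
  | k + 1 => mul p (mpowAux mul e p k)

end Aux

/-- In a Banach lattice algebra with identity, the
multiplicative identity is positive. -/
theorem identity_of_banach_lattice_algebra_is_positive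
    {A : Type*} [NormedAddCommGroup A] [Lattice A] [HasSolidNorm A] [IsOrderedAddMonoid A]
    [NormedSpace ℝ A]
    [PosSMulStrictMono ℝ A] [PosSMulReflectLT ℝ A] [CompleteSpace A]
    -- the (bilinear, associative, submultiplicative, positive) product
    (mul : A →ₗ[ℝ] A →ₗ[ℝ] A)
    (mul_assoc : ∀ a b c : A, mul (mul a b) c = mul a (mul b c))
    (norm_mul_le : ∀ a b : A, ‖mul a b‖ ≤ ‖a‖ * ‖b‖)
    (mul_nonneg : ∀ a b : A, 0 ≤ a → 0 ≤ b → 0 ≤ mul a b)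
    -- a two-sided identity of norm one
    (e : A) (one_mul : ∀ a : A, mul e a = a) (mul_one : ∀ a : A, mul a e = a)
    (norm_e : ‖e‖ = 1) :
    0 ≤ e := by
  set p : A := e⁺ with hp
  set n : A := e⁻ with hn
  have hpn : p - n = e := posPart_sub_negPart e
  have hpe : p = e + n := by rw [← hpn]; abel
  have hp0 : (0 : A) ≤ p := posPart_nonneg e
  have hn0 : (0 : A) ≤ n := negPart_nonneg e
  -- monotonicity of multiplication by a nonneg element on the left
  have mono : ∀ a x y : A, 0 ≤ a → x ≤ y → mul a x ≤ mul a y := by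
    intro a x y ha hxy
    have := mul_nonneg a (y - x) ha (by simpa using sub_nonneg.mpr hxy)
    have h : mul a y - mul a x = mul a (y - x) := by simp [map_sub]
    exact sub_nonneg.mp (h.symm ▸ this)
  -- ‖p‖ ≤ 1
  have hnormp : ‖p‖ ≤ 1 := by
    have h1 : |p| ≤ |e| := by
      rw [abs_of_nonneg hp0, ← posPart_add_negPart e]
      exact le_add_of_nonneg_right hn0
    calc ‖p‖ ≤ ‖e‖ := HasSolidNorm.solid h1
    _ = 1 := norm_e
  -- mul p n = n + n²
  have hmulpn : mul p n = n + mul n n := by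
    rw [hpe, map_add, LinearMap.add_apply, one_mul]
  -- norms of powers of p
  have hnormpow : ∀ k, ‖mpowAux mul e p k‖ ≤ 1 := by
    intro k
    induction k with
    | zero => simp [mpowAux, norm_e]
    | succ k ih =>
        calc ‖mpowAux mul e p (k + 1)‖ ≤ ‖p‖ * ‖mpowAux mul e p k‖ :=
              norm_mul_le _ _
        _ ≤ 1 * 1 := by
              apply mul_le_mul hnormp ih (norm_nonneg _) zero_le_one
        _ = 1 := by ring
  -- lower bound: n + k • n² ≤ pᵏ n
  have hlow : ∀ k : ℕ, n + k • mul n n ≤ mul (mpowAux mul e p k) n := by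
    intro k
    induction k with
    | zero => simp [mpowAux, one_mul]
    | succ k ih =>
        have h1 : mul (mpowAux mul e p (k + 1)) n
            = mul p (mul (mpowAux mul e p k) n) := by
          rw [show mpowAux mul e p (k + 1) = mul p (mpowAux mul e p k) from rfl,
            mul_assoc]
        rw [h1]
        have h2 : mul p (n + k • mul n n) ≤ mul p (mul (mpowAux mul e p k) n) :=
          mono _ _ _ hp0 ih
        have h3 : mul p (n + k • mul n n) = mul p n + k • mul p (mul n n) := by
          rw [map_add, map_nsmul]
        have h4 : mul n n ≤ mul p (mul n n) := by
          rw [hpe, map_add, LinearMap.add_apply, one_mul]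
          exact le_add_of_nonneg_right
            (mul_nonneg _ _ hn0 (mul_nonneg _ _ hn0 hn0))
        have h5 : k • mul n n ≤ k • mul p (mul n n) := nsmul_le_nsmul_right h4 k
        have h6 : n + (k + 1) • mul n n ≤ mul p n + k • mul p (mul n n) := by
          rw [hmulpn, succ_nsmul]
          have : n + (k • mul n n + mul n n) = (n + mul n n) + k • mul n n := by
            abel
          rw [this]
          exact add_le_add_right h5 _
        calc n + (k + 1) • mul n n ≤ mul p n + k • mul p (mul n n) := h6
        _ = mul p (n + k • mul n n) := h3.symm
        _ ≤ _ := h2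
  -- conclude n² = 0
  have hn2 : mul n n = 0 := by
    have key : ∀ k : ℕ, (k : ℝ) * ‖mul n n‖ ≤ ‖n‖ := by
      intro k
      have h0 : (0 : A) ≤ k • mul n n := nsmul_nonneg (mul_nonneg _ _ hn0 hn0) k
      have h1 : k • mul n n ≤ mul (mpowAux mul e p k) n :=
        le_trans (le_add_of_nonneg_left hn0) (hlow k)
      have h2 : ‖k • mul n n‖ ≤ ‖mul (mpowAux mul e p k) n‖ := by
        apply HasSolidNorm.solid
        rw [abs_of_nonneg h0,
          abs_of_nonneg (le_trans h0 h1)]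
        exact h1
      have h3 : ‖mul (mpowAux mul e p k) n‖ ≤ ‖n‖ := by
        calc ‖mul (mpowAux mul e p k) n‖ ≤ ‖mpowAux mul e p k‖ * ‖n‖ :=
              norm_mul_le _ _
        _ ≤ 1 * ‖n‖ := by
              apply mul_le_mul_of_nonneg_right (hnormpow k) (norm_nonneg _)
        _ = ‖n‖ := by ring
      calc (k : ℝ) * ‖mul n n‖ = ‖k • mul n n‖ := by
            rw [← Nat.cast_smul_eq_nsmul ℝ, norm_smul, Real.norm_natCast]
      _ ≤ ‖n‖ := le_trans h2 h3
    by_contra hne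
    have hpos : 0 < ‖mul n n‖ := norm_pos_iff.mpr hne
    obtain ⟨k, hk⟩ := exists_nat_gt (‖n‖ / ‖mul n n‖)
    have := key k
    rw [div_lt_iff₀ hpos] at hk
    linarith
  -- pᵏ = e + k • n
  have hpowk : ∀ k : ℕ, mpowAux mul e p k = e + k • n := by
    intro k
    induction k with
    | zero => simp [mpowAux]
    | succ k ih =>
        have : mpowAux mul e p (k + 1) = mul p (e + k • n) := by
          rw [show mpowAux mul e p (k + 1) = mul p (mpowAux mul e p k) from rfl,
            ih]
        rw [this, map_add, map_nsmul, mul_one, hmulpn, hn2, hpe, succ_nsmul]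
        abel
  -- conclude n = 0
  have hnzero : n = 0 := by
    have key : ∀ k : ℕ, (k : ℝ) * ‖n‖ ≤ 2 := by
      intro k
      have h1 : ‖e + k • n‖ ≤ 1 := by rw [← hpowk k]; exact hnormpow k
      have h2 : ‖k • n‖ ≤ ‖e + k • n‖ + ‖e‖ := by
        have h := norm_sub_le (e + k • n) e
        rwa [add_sub_cancel_left] at h
      have h3 : ‖k • n‖ = (k : ℝ) * ‖n‖ := by
        rw [← Nat.cast_smul_eq_nsmul ℝ, norm_smul, Real.norm_natCast]
      linarith [h3 ▸ h2, norm_e ▸ h1, le_of_eq norm_e]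
    by_contra hne
    have hpos : 0 < ‖n‖ := norm_pos_iff.mpr hne
    obtain ⟨k, hk⟩ := exists_nat_gt ((2 : ℝ) / ‖n‖)
    have := key k
    rw [div_lt_iff₀ hpos] at hk
    linarith
  rw [← negPart_eq_zero]
  exact hnzero
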